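/- Let E be an m×M matrix over a finite field F_q, let f be uniformly distributed over F_q^M, and let u = E f^t be observed. Then for every nonzero vector v of Hamming weight less than d(C_E) (the minimum distance of the row-space code of E), the conditional distribution of v f^t given E f^t = u is uniform over F_q; i.e., the mutual information I(v f^t ; E f^t) = 0. -/

import Mathlib

/-- For a uniformly distributed file `f`, the conditional distribution of
`v ⬝ f` given `E f = u` is uniform, for every nonzero `v` of Hamming weight less than the
minimum distance of the row-space code of `E`.  Equivalently (counting formulation of zero
mutual information): for every realizable observation `u` and every pair of values
`s, s'`, the number of files consistent with `u` and value `s` equals the number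
consistent with `u` and value `s'`. -/
theorem stmt1 {F : Type*} [Field F] [Fintype F] [DecidableEq F]
    {m M : ℕ} (E : Matrix (Fin m) (Fin M) F)
    (v : Fin M → F) (hv0 : v ≠ 0)
    (hv : ∀ α : Fin m → F, Matrix.vecMul α E ≠ 0 →
      hammingNorm v < hammingNorm (Matrix.vecMul α E))
    (u : Fin m → F) (hu : ∃ f : Fin M → F, Matrix.mulVec E f = u)
    (s s' : F) :
    Nat.card {f : Fin M → F // Matrix.mulVec E f = u ∧ dotProduct v f = s} =
      Nat.card {f : Fin M → F // Matrix.mulVec E f = u ∧ dotProduct v f = s'} := by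
  classical
  -- Step 1: there is `g` in the kernel of `E` with `v ⬝ g ≠ 0`.
  have hker : ¬ (∀ g : Fin M → F, Matrix.mulVec E g = 0 → dotProduct v g = 0) := by
    intro h
    set L : (Fin M → F) →ₗ[F] (Fin m → F) := Matrix.mulVecLin E with hL
    let φ : (Fin M → F) →ₗ[F] F :=
      { toFun := fun x => dotProduct v x
        map_add' := fun x y => dotProduct_add v x y
        map_smul' := fun c x => by simp [dotProduct_smul, smul_eq_mul] }
    have hk : LinearMap.ker L ≤ LinearMap.ker φ := by
      intro x hx
      simp only [LinearMap.mem_ker] at hx ⊢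
      exact h x hx
    -- factor φ through the range of L and extend
    let φ' := (LinearMap.ker L).liftQ φ hk
    let e := L.quotKerEquivRange
    let ψ₀ : LinearMap.range L →ₗ[F] F := φ'.comp (e.symm : LinearMap.range L →ₗ[F] _)
    obtain ⟨ψ, hψ⟩ := LinearMap.exists_extend ψ₀
    have key : ∀ x : Fin M → F, ψ (L x) = φ x := by
      intro x
      have h1 : (⟨L x, LinearMap.mem_range_self L x⟩ : LinearMap.range L) =
          e (Submodule.Quotient.mk x) := by
        ext
        simp [e, LinearMap.quotKerEquivRange_apply_mk]
      have : ψ (L x) = ψ₀ ⟨L x, LinearMap.mem_range_self L x⟩ := by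
        have h5 := congrArg (fun F => F ⟨L x, LinearMap.mem_range_self L x⟩) hψ
        simp only [LinearMap.comp_apply, Submodule.subtype_apply] at h5
        exact h5
      rw [this, h1]
      simp [ψ₀, φ']
    set α : Fin m → F := fun i => ψ (fun j => if i = j then 1 else 0) with hα
    have hvα : v = Matrix.vecMul α E := by
      funext j
      have h2 : φ (fun k => if j = k then 1 else 0) = v j := by
        simp [φ, dotProduct]
      have h3 : ψ (L (fun k => if j = k then 1 else 0)) = v j := by rw [key]; exact h2
      rw [LinearMap.pi_apply_eq_sum_univ ψ (L (fun k => if j = k then 1 else 0))] at h3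
      have h4 : ∀ i, (L (fun k => if j = k then 1 else 0)) i = E i j := by
        intro i
        simp [hL, Matrix.mulVecLin, Matrix.mulVec, dotProduct]
      rw [← h3]
      simp only [Matrix.vecMul, dotProduct, hα]
      exact Finset.sum_congr rfl fun i _ => by rw [h4 i, smul_eq_mul, mul_comm]
    by_cases hz : Matrix.vecMul α E = 0
    · exact hv0 (hvα.trans hz)
    · have := hv α hz
      rw [← hvα] at this
      exact lt_irrefl _ this
  push_neg at hker
  obtain ⟨g, hg0, hgv⟩ := hker
  set t : F := dotProduct v g with ht
  -- Step 2: translation by a suitable multiple of `g` is a bijection.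
  have shift : ∀ (a b : F) (f : Fin M → F), Matrix.mulVec E f = u ∧ dotProduct v f = a →
      Matrix.mulVec E (f + ((b - a) / t) • g) = u ∧
        dotProduct v (f + ((b - a) / t) • g) = b := by
    intro a b f ⟨hf1, hf2⟩
    constructor
    · rw [Matrix.mulVec_add, Matrix.mulVec_smul, hg0, smul_zero, add_zero, hf1]
    · rw [dotProduct_add, dotProduct_smul, hf2, ← ht, smul_eq_mul,
        div_mul_cancel₀ _ hgv]
      ring
  have cancel : ∀ (a b : F) (f : Fin M → F),
      f + ((b - a) / t) • g + ((a - b) / t) • g = f := by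
    intro a b f
    rw [add_assoc, ← add_smul]
    have : (b - a) / t + (a - b) / t = 0 := by ring
    rw [this, zero_smul, add_zero]
  exact Nat.card_eq_of_bijective
    (fun x => ⟨x.1 + ((s' - s) / t) • g, shift s s' x.1 x.2⟩)
    ⟨fun x y hxy => by
        have := congrArg Subtype.val hxy
        simp only at this
        exact Subtype.ext (by
          have := congrArg (fun z => z + ((s - s') / t) • g) this
          simpa [cancel s s'] using this),
      fun y => ⟨⟨y.1 + ((s - s') / t) • g, shift s' s y.1 y.2⟩,
        Subtype.ext (by simpa using cancel s' s y.1)⟩⟩
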